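/- Let X be an (n,k)-PMD with mean μ and covariance matrix Σ, and let 0 < ε < 1. Define the positive-definite matrix Σ̃ = k·ln(k/ε)·Σ + k²·ln²(k/ε)·I. Then with probability at least 1 − ε/10 over X, one has (X − μ)ᵀ Σ̃⁻¹ (X − μ) = O(1), where the implied constant is universal. -/

import Mathlib

open MeasureTheory ProbabilityTheory Matrix Real
open scoped ENNReal NNReal

lemma exp_le_quad {x : ℝ} (h : |x| ≤ 1) : Real.exp x ≤ 1 + x + x ^ 2 := by
  have h2 := Real.exp_bound h (n := 2) (by norm_num)
  have hs : ∑ m ∈ Finset.range 2, x ^ m / m.factorial = 1 + x := by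
    simp [Finset.sum_range_succ]
  rw [hs] at h2
  have := abs_le.1 h2
  have hsq : |x| ^ 2 = x ^ 2 := sq_abs x
  norm_num at this
  nlinarith [this.2]

variable {Ω : Type} [MeasurableSpace Ω] {P : Measure Ω} [IsProbabilityMeasure P]

lemma mgf_le_of_bounded {Y : Ω → ℝ} (hm : Measurable Y) (hb : ∀ ω, |Y ω| ≤ 2)
    (h0 : ∫ ω, Y ω ∂P = 0) {t : ℝ} (ht0 : 0 ≤ t) (ht : t ≤ 1 / 2) :
    mgf Y P t ≤ Real.exp (t ^ 2 * ∫ ω, (Y ω) ^ 2 ∂P) := by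
  have hint1 : Integrable Y P := by
    refine ⟨hm.aestronglyMeasurable, HasFiniteIntegral.of_bounded (C := 2) ?_⟩
    exact ae_of_all _ fun ω => by simpa using hb ω
  have hint2 : Integrable (fun ω => (Y ω) ^ 2) P := by
    refine ⟨(hm.pow_const 2).aestronglyMeasurable, HasFiniteIntegral.of_bounded (C := 4) ?_⟩
    exact ae_of_all _ fun ω => by
      have := hb ω
      rw [Real.norm_eq_abs, abs_pow]
      nlinarith [abs_nonneg (Y ω)]
  have hintexp : Integrable (fun ω => Real.exp (t * Y ω)) P := by
    refine ⟨((hm.const_mul t).exp).aestronglyMeasurable,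
      HasFiniteIntegral.of_bounded (C := Real.exp 1) ?_⟩
    refine ae_of_all _ fun ω => ?_
    rw [Real.norm_eq_abs, abs_of_pos (Real.exp_pos _), Real.exp_le_exp]
    calc t * Y ω ≤ |t * Y ω| := le_abs_self _
      _ ≤ 1 := by
        rw [abs_mul, abs_of_nonneg ht0]
        calc t * |Y ω| ≤ (1/2) * 2 := by
              apply mul_le_mul ht (hb ω) (abs_nonneg _) (by norm_num)
          _ = 1 := by norm_num
  have hpt : ∀ ω, Real.exp (t * Y ω) ≤ 1 + t * Y ω + t ^ 2 * (Y ω) ^ 2 := by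
    intro ω
    have habs : |t * Y ω| ≤ 1 := by
      rw [abs_mul, abs_of_nonneg ht0]
      calc t * |Y ω| ≤ (1/2) * 2 := mul_le_mul ht (hb ω) (abs_nonneg _) (by norm_num)
        _ = 1 := by norm_num
    calc Real.exp (t * Y ω) ≤ 1 + t * Y ω + (t * Y ω) ^ 2 := exp_le_quad habs
      _ = 1 + t * Y ω + t ^ 2 * (Y ω) ^ 2 := by ring
  have hI : ∫ ω, Real.exp (t * Y ω) ∂P ≤ ∫ ω, (1 + t * Y ω + t ^ 2 * (Y ω) ^ 2) ∂P := by
    refine integral_mono hintexp ?_ hpt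
    exact (integrable_const 1).add ((hint1.const_mul t)) |>.add (hint2.const_mul (t ^ 2))
  have hRHS : ∫ ω, (1 + t * Y ω + t ^ 2 * (Y ω) ^ 2) ∂P
      = 1 + t ^ 2 * ∫ ω, (Y ω) ^ 2 ∂P := by
    have e1 : ∫ ω, (1 + t * Y ω + t ^ 2 * Y ω ^ 2) ∂P
        = (∫ ω, (1 + t * Y ω) ∂P) + ∫ ω, t ^ 2 * Y ω ^ 2 ∂P :=
      integral_add ((integrable_const 1).add (hint1.const_mul t)) (hint2.const_mul (t ^ 2))
    have e2 : ∫ ω, (1 + t * Y ω) ∂P = (∫ ω, (1 : ℝ) ∂P) + ∫ ω, t * Y ω ∂P :=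
      integral_add (integrable_const 1) (hint1.const_mul t)
    rw [e1, e2, integral_const_mul, integral_const_mul, h0]
    simp
  have hvar : 0 ≤ ∫ ω, (Y ω) ^ 2 ∂P := integral_nonneg fun ω => sq_nonneg _
  calc mgf Y P t = ∫ ω, Real.exp (t * Y ω) ∂P := rfl
    _ ≤ 1 + t ^ 2 * ∫ ω, (Y ω) ^ 2 ∂P := by rw [← hRHS]; exact hI
    _ ≤ Real.exp (t ^ 2 * ∫ ω, (Y ω) ^ 2 ∂P) := by
        have := Real.add_one_le_exp (t ^ 2 * ∫ ω, (Y ω) ^ 2 ∂P)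
        linarith

lemma chernoff_sum {n : ℕ} {Y : Fin n → Ω → ℝ} (hm : ∀ i, Measurable (Y i))
    (hindep : iIndepFun Y P)
    (hb : ∀ i ω, |Y i ω| ≤ 2) (h0 : ∀ i, ∫ ω, Y i ω ∂P = 0)
    {ν : ℝ} (hν : (∑ i, ∫ ω, (Y i ω) ^ 2 ∂P) ≤ ν)
    {s t : ℝ} (ht0 : 0 ≤ t) (ht : t ≤ 1 / 2) :
    (P {ω | s ≤ ∑ i, Y i ω}).toReal ≤ Real.exp (t ^ 2 * ν - t * s) := by
  have hintexp : ∀ i, Integrable (fun ω => Real.exp (t * Y i ω)) P := by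
    intro i
    refine ⟨(((hm i).const_mul t).exp).aestronglyMeasurable,
      HasFiniteIntegral.of_bounded (C := Real.exp 1) ?_⟩
    refine ae_of_all _ fun ω => ?_
    rw [Real.norm_eq_abs, abs_of_pos (Real.exp_pos _), Real.exp_le_exp]
    calc t * Y i ω ≤ |t * Y i ω| := le_abs_self _
      _ ≤ 1 := by
        rw [abs_mul, abs_of_nonneg ht0]
        calc t * |Y i ω| ≤ (1/2) * 2 := mul_le_mul ht (hb i ω) (abs_nonneg _) (by norm_num)
          _ = 1 := by norm_num
  have hW : Measurable (∑ i, Y i) := by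
    have : (∑ i, Y i) = fun ω => ∑ i, Y i ω := by
      ext ω; simp [Finset.sum_apply]
    rw [this]; exact Finset.measurable_sum _ fun i _ => hm i
  have hintW : Integrable (fun ω => Real.exp (t * (∑ i, Y i) ω)) P := by
    refine ⟨((hW.const_mul t).exp).aestronglyMeasurable,
      HasFiniteIntegral.of_bounded (C := Real.exp (t * (2 * n))) ?_⟩
    refine ae_of_all _ fun ω => ?_
    rw [Real.norm_eq_abs, abs_of_pos (Real.exp_pos _), Real.exp_le_exp]
    have : (∑ i, Y i) ω ≤ 2 * n := by
      rw [Finset.sum_apply]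
      calc (∑ i, Y i ω) ≤ ∑ i : Fin n, (2 : ℝ) := by
            exact Finset.sum_le_sum fun i _ => (abs_le.1 (hb i ω)).2
        _ = 2 * n := by simp [mul_comm]
    exact mul_le_mul_of_nonneg_left this ht0
  have hset : {ω | s ≤ ∑ i, Y i ω} = {ω | s ≤ (∑ i, Y i) ω} := by
    ext ω; simp [Finset.sum_apply]
  have hcher := measure_ge_le_exp_mul_mgf (X := ∑ i, Y i) (μ := P) (t := t) s ht0 hintW
  rw [hset]
  refine hcher.trans ?_
  have hmgf : mgf (∑ i, Y i) P t = ∏ i, mgf (Y i) P t :=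
    hindep.mgf_sum hm Finset.univ
  have hprod : (∏ i, mgf (Y i) P t) ≤ Real.exp (t ^ 2 * ∑ i, ∫ ω, (Y i ω) ^ 2 ∂P) := by
    rw [Finset.mul_sum, Real.exp_sum]
    refine Finset.prod_le_prod (fun i _ => mgf_nonneg) fun i _ =>
      mgf_le_of_bounded (hm i) (hb i) (h0 i) ht0 ht
  calc Real.exp (-t * s) * mgf (∑ i, Y i) P t
      ≤ Real.exp (-t * s) * Real.exp (t ^ 2 * ν) := by
        refine mul_le_mul_of_nonneg_left ?_ (Real.exp_pos _).le
        rw [hmgf]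
        refine hprod.trans ?_
        rw [Real.exp_le_exp]
        exact mul_le_mul_of_nonneg_left hν (sq_nonneg t)
    _ = Real.exp (t ^ 2 * ν - t * s) := by rw [← Real.exp_add]; ring_nf

lemma bernstein_tail {n : ℕ} {Y : Fin n → Ω → ℝ} (hm : ∀ i, Measurable (Y i))
    (hindep : iIndepFun Y P)
    (hb : ∀ i ω, |Y i ω| ≤ 2) (h0 : ∀ i, ∫ ω, Y i ω ∂P = 0)
    {ν : ℝ} (hν : (∑ i, ∫ ω, (Y i ω) ^ 2 ∂P) ≤ ν) (hν0 : 0 ≤ ν)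
    {s E : ℝ} (hs : 0 < s) (hE1 : E ≤ s / 4) (hE2 : ν ≤ s ∨ E ≤ s ^ 2 / (4 * ν)) :
    (P {ω | s ≤ ∑ i, Y i ω}).toReal ≤ Real.exp (-E) := by
  by_cases hνs : ν ≤ s
  · have h := chernoff_sum (P := P) hm hindep hb h0 hν (s := s) (t := 1/2) (by norm_num) le_rfl
    refine h.trans ?_
    rw [Real.exp_le_exp]
    nlinarith
  · push_neg at hνs
    have hν0' : 0 < ν := lt_trans hs hνs
    rcases hE2 with h | hE2
    · exact absurd h (not_le.2 hνs)
    have ht0 : (0:ℝ) ≤ s / (2 * ν) := by positivity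
    have ht : s / (2 * ν) ≤ 1 / 2 := by
      rw [div_le_div_iff₀ (by positivity) (by norm_num)]
      nlinarith
    have h := chernoff_sum (P := P) hm hindep hb h0 hν (s := s) ht0 ht
    refine h.trans ?_
    rw [Real.exp_le_exp]
    have hexp : (s / (2 * ν)) ^ 2 * ν - s / (2 * ν) * s = -(s ^ 2 / (4 * ν)) := by
      field_simp
      ring
    rw [hexp]
    linarith

set_option maxHeartbeats 1000000

theorem stmt5 :
    ∃ C : ℝ, 0 < C ∧
    ∀ (Ω : Type) [MeasurableSpace Ω] (P : Measure Ω), IsProbabilityMeasure P →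
    ∀ (n k : ℕ) (ε : ℝ), 0 < ε → ε < 1 →
    ∀ (X : Fin n → Ω → Fin k → ℝ),
      (∀ i, Measurable (X i)) →
      iIndepFun X P →
      (∀ i ω, ∃ j, X i ω = fun l => if l = j then (1 : ℝ) else 0) →
    ∀ (μv : Fin k → ℝ), (∀ j, μv j = ∫ ω, (∑ i, X i ω j) ∂P) →
    ∀ (S : Matrix (Fin k) (Fin k) ℝ),
      (∀ a b, S a b = ∫ ω, ((∑ i, X i ω a) - μv a) * ((∑ i, X i ω b) - μv b) ∂P) →
      P {ω | (fun j => (∑ i, X i ω j) - μv j) ⬝ᵥ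
          ((((k : ℝ) * Real.log (k / ε)) • S +
              ((k : ℝ) ^ 2 * (Real.log (k / ε)) ^ 2) • (1 : Matrix (Fin k) (Fin k) ℝ))⁻¹
            *ᵥ (fun j => (∑ i, X i ω j) - μv j)) ≤ C}
        ≥ ENNReal.ofReal (1 - ε / 10) := by
  classical
  refine ⟨1000, by norm_num, ?_⟩
  intro Ω _ P hP n k ε hε0 hε1 X hXm hXindep hXsupp μv hμv S hS
  have hof1 : ENNReal.ofReal (1 - ε / 10) ≤ 1 := ENNReal.ofReal_le_one.2 (by linarith)
  have intbdd : ∀ (f : Ω → ℝ) (cc : ℝ), Measurable f → (∀ ω, |f ω| ≤ cc) → Integrable f P :=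
    fun f cc hm hb => ⟨hm.aestronglyMeasurable,
      HasFiniteIntegral.of_bounded (C := cc) (ae_of_all _ (fun ω => by simpa using hb ω))⟩
  rcases Nat.lt_or_ge k 2 with hk | hk
  · -- degenerate cases k = 0, 1
    have huniv : ∀ (A : Set Ω), A = Set.univ → ENNReal.ofReal (1 - ε / 10) ≤ P A := by
      intro A hA; rw [hA, measure_univ]; exact hof1
    interval_cases k
    · refine huniv _ (Set.eq_univ_of_forall fun ω => ?_)
      show _ ⬝ᵥ _ ≤ (1000 : ℝ)
      simp [dotProduct]
    · have hX1 : ∀ i ω (j : Fin 1), X i ω j = 1 := by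
        intro i ω j
        obtain ⟨j', hj'⟩ := hXsupp i ω
        rw [hj']
        simp [Subsingleton.elim j j']
      have hv0 : ∀ ω : Ω, (fun j : Fin 1 => (∑ i, X i ω j) - μv j) = fun _ => 0 := by
        intro ω
        funext j
        have hμ : μv j = n := by
          rw [hμv j]
          have : ∀ ω' : Ω, (∑ i, X i ω' j) = (n : ℝ) := by
            intro ω'; simp [hX1]
          rw [integral_congr_ae (ae_of_all _ this), integral_const]
          simp
        simp [hX1, hμ]
      refine huniv _ (Set.eq_univ_of_forall fun ω => ?_)
      show _ ⬝ᵥ _ ≤ (1000 : ℝ)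
      rw [hv0 ω]
      simp [dotProduct]
  · -- main case k ≥ 2
    classical
    have hk2 : (2:ℝ) ≤ (k:ℝ) := by exact_mod_cast hk
    have hk0 : (0:ℝ) < k := by linarith
    have hkne : (k:ℝ) ≠ 0 := ne_of_gt hk0
    set L := Real.log ((k:ℝ) / ε) with hLdef
    have hkε : (2:ℝ) ≤ (k:ℝ) / ε := by
      rw [le_div_iff₀ hε0]
      nlinarith
    have hL2 : Real.log 2 ≤ L := Real.log_le_log (by norm_num) hkε
    have hL0 : 0 < L := lt_of_lt_of_le (Real.log_pos (by norm_num)) hL2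
    set M : Matrix (Fin k) (Fin k) ℝ :=
      ((k : ℝ) * L) • S + ((k : ℝ) ^ 2 * L ^ 2) • (1 : Matrix (Fin k) (Fin k) ℝ) with hMdef
    set v : Ω → Fin k → ℝ := fun ω a => (∑ i, X i ω a) - μv a with hvdef
    set p : Fin n → Fin k → ℝ := fun i a => ∫ ω, X i ω a ∂P with hpdef
    set d : Fin n → Ω → Fin k → ℝ := fun i ω a => X i ω a - p i a with hddef
    -- basic facts about X
    have hX01 : ∀ i ω a, 0 ≤ X i ω a ∧ X i ω a ≤ 1 := by
      intro i ω a
      obtain ⟨j, hj⟩ := hXsupp i ω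
      rw [hj]
      by_cases h : a = j <;> simp [h]
    have hXsum : ∀ i ω, ∑ a, X i ω a = 1 := by
      intro i ω
      obtain ⟨j, hj⟩ := hXsupp i ω
      rw [hj]
      simp
    have hXam : ∀ i a, Measurable fun ω => X i ω a := fun i a =>
      (measurable_pi_apply a).comp (hXm i)
    have hXint : ∀ i a, Integrable (fun ω => X i ω a) P := fun i a =>
      intbdd _ 1 (hXam i a) fun ω => abs_le.2 ⟨by linarith [(hX01 i ω a).1], (hX01 i ω a).2⟩
    have hp01 : ∀ i a, 0 ≤ p i a ∧ p i a ≤ 1 := by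
      intro i a
      constructor
      · exact integral_nonneg fun ω => (hX01 i ω a).1
      · calc ∫ ω, X i ω a ∂P ≤ ∫ _, (1:ℝ) ∂P :=
              integral_mono (hXint i a) (integrable_const 1) fun ω => (hX01 i ω a).2
          _ = 1 := by simp
    have hdb : ∀ i ω a, |d i ω a| ≤ 1 := by
      intro i ω a
      have h1 := hX01 i ω a
      have h2 := hp01 i a
      rw [abs_le]
      constructor <;> [skip; skip] <;> simp only [hddef] <;> nlinarith [h1.1, h1.2, h2.1, h2.2]
    have hμv' : ∀ a, μv a = ∑ i, p i a := by
      intro a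
      rw [hμv a, integral_finset_sum _ fun i _ => hXint i a]
    have hvd : ∀ ω a, v ω a = ∑ i, d i ω a := by
      intro ω a
      simp only [hvdef, hddef, hμv' a, Finset.sum_sub_distrib]
    have hvm : ∀ a, Measurable fun ω => v ω a := by
      intro a
      exact (Finset.measurable_sum _ fun i _ => hXam i a).sub measurable_const
    have hvb : ∀ ω a, |v ω a| ≤ n := by
      intro ω a
      rw [hvd ω a]
      calc |∑ i, d i ω a| ≤ ∑ i, |d i ω a| := Finset.abs_sum_le_sum_abs _ _
        _ ≤ ∑ _i : Fin n, (1:ℝ) := Finset.sum_le_sum fun i _ => hdb i ω a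
        _ = n := by simp
    have hd2 : ∀ i ω, ∑ a, (d i ω a) ^ 2 ≤ 2 := by
      intro i ω
      have hpt : ∀ a, (d i ω a) ^ 2 ≤ X i ω a + p i a := by
        intro a
        have h1 := hX01 i ω a
        have h2 := hp01 i a
        rcases (hXsupp i ω) with ⟨j, hj⟩
        have : X i ω a = 0 ∨ X i ω a = 1 := by
          rw [hj]; by_cases h : a = j <;> simp [h]
        simp only [hddef]
        rcases this with h | h <;> rw [h] <;> nlinarith [h2.1, h2.2]
      calc ∑ a, (d i ω a) ^ 2 ≤ ∑ a, (X i ω a + p i a) := Finset.sum_le_sum fun a _ => hpt a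
        _ = (∑ a, X i ω a) + ∑ a, p i a := Finset.sum_add_distrib
        _ ≤ 2 := by
            rw [hXsum i ω]
            have : ∑ a, p i a = 1 := by
              rw [hpdef]
              simp only
              rw [← integral_finset_sum _ fun a _ => hXint i a]
              simp [hXsum]
            rw [this]; norm_num
    -- quadratic form identity
    have hquad : ∀ z : Fin k → ℝ, z ⬝ᵥ (S *ᵥ z) = ∫ ω, (∑ a, z a * v ω a) ^ 2 ∂P := by
      intro z
      have hintab : ∀ a b : Fin k, Integrable (fun ω => z a * z b * (v ω a * v ω b)) P := by
        intro a b
        refine intbdd _ (|z a * z b| * ((n:ℝ) * n)) (((hvm a).mul (hvm b)).const_mul _) fun ω => ?_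
        rw [abs_mul]
        refine mul_le_mul_of_nonneg_left ?_ (abs_nonneg _)
        rw [abs_mul]
        exact mul_le_mul (hvb ω a) (hvb ω b) (abs_nonneg _) (Nat.cast_nonneg n)
      have hpt : ∀ ω, (∑ a, z a * v ω a) ^ 2 = ∑ a, ∑ b, z a * z b * (v ω a * v ω b) := by
        intro ω
        rw [sq, Finset.sum_mul_sum]
        exact Finset.sum_congr rfl fun a _ => Finset.sum_congr rfl fun b _ => by ring
      calc z ⬝ᵥ (S *ᵥ z) = ∑ a, ∑ b, z a * z b * S a b := by
            simp only [dotProduct, Matrix.mulVec, Finset.mul_sum]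
            exact Finset.sum_congr rfl fun a _ => Finset.sum_congr rfl fun b _ => by ring
        _ = ∑ a, ∑ b, ∫ ω, z a * z b * (v ω a * v ω b) ∂P := by
            refine Finset.sum_congr rfl fun a _ => Finset.sum_congr rfl fun b _ => ?_
            rw [integral_const_mul, hS a b]
        _ = ∫ ω, ∑ a, ∑ b, z a * z b * (v ω a * v ω b) ∂P := by
            rw [integral_finset_sum _ fun a _ =>
              integrable_finset_sum _ fun b _ => hintab a b]
            exact Finset.sum_congr rfl fun a _ =>
              (integral_finset_sum _ fun b _ => hintab a b).symm
        _ = ∫ ω, (∑ a, z a * v ω a) ^ 2 ∂P := by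
            exact integral_congr_ae (ae_of_all _ fun ω => (hpt ω).symm)
    have hquadnn : ∀ z : Fin k → ℝ, 0 ≤ z ⬝ᵥ (S *ᵥ z) := by
      intro z
      rw [hquad z]
      exact integral_nonneg fun ω => sq_nonneg _
    have hSh : S.IsHermitian := by
      rw [Matrix.IsHermitian]
      ext a b
      rw [Matrix.conjTranspose_apply]
      simp only [star_trivial]
      rw [hS b a, hS a b]
      exact integral_congr_ae (ae_of_all _ fun ω => by ring)
    have hquadM : ∀ z : Fin k → ℝ,
        z ⬝ᵥ (M *ᵥ z) = (k:ℝ) * L * (z ⬝ᵥ (S *ᵥ z)) + (k:ℝ) ^ 2 * L ^ 2 * (z ⬝ᵥ z) := by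
      intro z
      rw [hMdef, Matrix.add_mulVec, Matrix.smul_mulVec, Matrix.smul_mulVec,
        Matrix.one_mulVec, dotProduct_add, dotProduct_smul,
        dotProduct_smul, smul_eq_mul, smul_eq_mul]
    have hMh : M.IsHermitian := by
      rw [Matrix.IsHermitian, hMdef, Matrix.conjTranspose_add, Matrix.conjTranspose_smul,
        Matrix.conjTranspose_smul, Matrix.conjTranspose_one]
      rw [Matrix.IsHermitian] at hSh
      rw [hSh]
      simp [star_trivial]
    have hMpd : M.PosDef := by
      refine Matrix.posDef_iff_dotProduct_mulVec.2 ⟨hMh, fun x hx => ?_⟩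
      simp only [star_trivial, RCLike.re_to_real]
      rw [hquadM x]
      have h1 : 0 < x ⬝ᵥ x := by
        obtain ⟨a, ha⟩ := Function.ne_iff.1 hx
        exact Finset.sum_pos' (fun b _ => mul_self_nonneg _)
          ⟨a, Finset.mem_univ a, mul_self_pos.2 ha⟩
      have h2 := hquadnn x
      have h3 : 0 < (k:ℝ) * L := mul_pos hk0 hL0
      have h4 : 0 < (k:ℝ) ^ 2 * L ^ 2 := by positivity
      nlinarith
    have hdet : IsUnit M.det := hMpd.det_pos.ne'.isUnit
    -- eigendecomposition
    set b := hMpd.isHermitian.eigenvectorBasis with hbdef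
    set u : Fin k → Fin k → ℝ := fun j => (b j : EuclideanSpace ℝ (Fin k)) with hudef
    set m : Fin k → ℝ := hMpd.isHermitian.eigenvalues with hmdef
    have hm0 : ∀ j, 0 < m j := fun j => hMpd.eigenvalues_pos j
    have hMu : ∀ j, M *ᵥ u j = m j • u j := fun j =>
      hMpd.isHermitian.mulVec_eigenvectorBasis j
    have hinner : ∀ (x : EuclideanSpace ℝ (Fin k)) (y : EuclideanSpace ℝ (Fin k)),
        (inner ℝ x y : ℝ) = ∑ a, x a * y a := by
      intro x y
      simp [PiLp.inner_apply, RCLike.inner_apply, conj_trivial]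
      exact Finset.sum_congr rfl fun a _ => mul_comm _ _
    have huu : ∀ j j', (∑ a, u j a * u j' a) = if j = j' then (1:ℝ) else 0 := by
      intro j j'
      rw [← hinner (b j) (b j')]
      exact orthonormal_iff_ite.1 b.orthonormal j j'
    have huu1 : ∀ j, u j ⬝ᵥ u j = 1 := by
      intro j
      have h := huu j j
      simp only [if_pos] at h
      rw [dotProduct]
      simpa using h
    have hunorm : ∀ j, ∑ a, (u j a) ^ 2 = 1 := by
      intro j
      have h := huu1 j
      rw [dotProduct] at h
      rw [← h]
      exact Finset.sum_congr rfl fun a _ => sq (u j a)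
    set ν : Fin k → ℝ := fun j => u j ⬝ᵥ (S *ᵥ u j) with hνdef
    have hν0 : ∀ j, 0 ≤ ν j := fun j => hquadnn (u j)
    have hmν : ∀ j, m j = (k:ℝ) * L * ν j + (k:ℝ) ^ 2 * L ^ 2 := by
      intro j
      have h1 : u j ⬝ᵥ (M *ᵥ u j) = m j := by
        rw [hMu j, dotProduct_smul, smul_eq_mul, huu1 j, mul_one]
      have h2 := hquadM (u j)
      rw [h1, huu1 j, mul_one] at h2
      exact h2
    -- row orthonormality
    have huu' : ∀ a a', (∑ j, u j a * u j a') = if a = a' then (1:ℝ) else 0 := by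
      set U : Matrix (Fin k) (Fin k) ℝ := Matrix.of fun a j => u j a with hUdef
      have hUtU : Uᵀ * U = 1 := by
        ext j j'
        rw [Matrix.mul_apply]
        simp only [Matrix.transpose_apply, hUdef, Matrix.of_apply, Matrix.one_apply]
        rw [huu j j']
      have hUUt : U * Uᵀ = 1 := mul_eq_one_comm.1 hUtU
      intro a a'
      have := congrFun (congrFun hUUt a) a'
      rw [Matrix.mul_apply] at this
      simp only [Matrix.transpose_apply, hUdef, Matrix.of_apply, Matrix.one_apply] at this
      rw [← this]
    set c : Fin k → Ω → ℝ := fun j ω => ∑ a, u j a * v ω a with hcdef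
    have hcm : ∀ j, Measurable (c j) := fun j =>
      Finset.measurable_sum _ fun a _ => ((hvm a).const_mul _)
    have hvexp : ∀ ω a', v ω a' = ∑ j, c j ω * u j a' := by
      intro ω a'
      calc v ω a' = ∑ a, v ω a * (if a = a' then (1:ℝ) else 0) := by
            symm
            simp [mul_ite, mul_one, mul_zero]
        _ = ∑ a, v ω a * ∑ j, u j a * u j a' := by
            exact Finset.sum_congr rfl fun a _ => by rw [huu' a a']
        _ = ∑ a, ∑ j, v ω a * (u j a * u j a') := by
            exact Finset.sum_congr rfl fun a _ => Finset.mul_sum _ _ _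
        _ = ∑ j, ∑ a, v ω a * (u j a * u j a') := Finset.sum_comm
        _ = ∑ j, c j ω * u j a' := by
            refine Finset.sum_congr rfl fun j _ => ?_
            rw [hcdef]
            simp only
            rw [Finset.sum_mul]
            exact Finset.sum_congr rfl fun a _ => by ring
    have hQ : ∀ ω, v ω ⬝ᵥ (M⁻¹ *ᵥ v ω) = ∑ j, (c j ω) ^ 2 / m j := by
      intro ω
      set w : Fin k → ℝ := fun a => ∑ j, (c j ω / m j) * u j a with hwdef
      have hw : M *ᵥ w = v ω := by
        funext a'
        show (M *ᵥ w) a' = v ω a'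
        rw [Matrix.mulVec, dotProduct]
        calc ∑ a, M a' a * w a = ∑ a, ∑ j, (c j ω / m j) * (M a' a * u j a) := by
              refine Finset.sum_congr rfl fun a _ => ?_
              rw [hwdef]
              simp only
              rw [Finset.mul_sum]
              exact Finset.sum_congr rfl fun j _ => by ring
          _ = ∑ j, ∑ a, (c j ω / m j) * (M a' a * u j a) := Finset.sum_comm
          _ = ∑ j, (c j ω / m j) * ((M *ᵥ u j) a') := by
              refine Finset.sum_congr rfl fun j _ => ?_
              rw [Matrix.mulVec, dotProduct, Finset.mul_sum]
          _ = ∑ j, c j ω * u j a' := by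
              refine Finset.sum_congr rfl fun j _ => ?_
              rw [hMu j]
              simp only [Pi.smul_apply, smul_eq_mul]
              have hmne : m j ≠ 0 := (hm0 j).ne'
              field_simp
          _ = v ω a' := (hvexp ω a').symm
      have hinv : M⁻¹ *ᵥ v ω = w := by
        rw [← hw, Matrix.mulVec_mulVec, Matrix.nonsing_inv_mul M hdet, Matrix.one_mulVec]
      rw [hinv, dotProduct]
      calc ∑ a, v ω a * w a = ∑ a, ∑ j, (c j ω / m j) * (u j a * v ω a) := by
            refine Finset.sum_congr rfl fun a _ => ?_
            rw [hwdef]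
            simp only
            rw [Finset.mul_sum]
            exact Finset.sum_congr rfl fun j _ => by ring
        _ = ∑ j, ∑ a, (c j ω / m j) * (u j a * v ω a) := Finset.sum_comm
        _ = ∑ j, (c j ω) ^ 2 / m j := by
            refine Finset.sum_congr rfl fun j _ => ?_
            rw [← Finset.mul_sum]
            have hce : ∑ a, u j a * v ω a = c j ω := rfl
            rw [hce]
            have hmne : m j ≠ 0 := (hm0 j).ne'
            field_simp
    -- tail bounds
    set sj : Fin k → ℝ := fun j => Real.sqrt ((1000 / (k:ℝ)) * m j) with hsdef
    have hs0 : ∀ j, 0 < sj j := fun j =>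
      Real.sqrt_pos.2 (mul_pos (div_pos (by norm_num) hk0) (hm0 j))
    have hs2 : ∀ j, (sj j) ^ 2 = (1000 / (k:ℝ)) * m j := fun j =>
      Real.sq_sqrt (le_of_lt (mul_pos (div_pos (by norm_num) hk0) (hm0 j)))
    set E : ℝ := Real.log (20 * k / ε) with hEdef
    have hexpE : Real.exp (-E) = ε / (20 * k) := by
      have h20k : (0:ℝ) < 20 * k / ε := div_pos (mul_pos (by norm_num) hk0) hε0
      rw [hEdef, Real.exp_neg, Real.exp_log h20k, inv_div]
    have hE6 : E ≤ 6 * L := by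
      have h20 : (20:ℝ) * k / ε = 20 * ((k:ℝ) / ε) := by ring
      have hkεpos : (0:ℝ) < (k:ℝ) / ε := div_pos hk0 hε0
      rw [hEdef, h20, Real.log_mul (by norm_num) (ne_of_gt hkεpos), ← hLdef]
      have h1 : Real.log 20 ≤ 5 * L := by
        have ha : Real.log 20 ≤ Real.log 32 := Real.log_le_log (by norm_num) (by norm_num)
        have h32 : Real.log 32 = 5 * Real.log 2 := by
          rw [show (32:ℝ) = 2 ^ 5 by norm_num, Real.log_pow]
          push_cast; ring
        nlinarith [hL2]
      linarith
    have htail : ∀ j, P {ω | sj j ≤ |c j ω|} ≤ ENNReal.ofReal (ε / (10 * k)) := by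
      intro j
      set Y : Fin n → Ω → ℝ := fun i ω => ∑ a, u j a * d i ω a with hYdef
      have hYm : ∀ i, Measurable (Y i) := fun i =>
        Finset.measurable_sum _ fun a _ => (((hXam i a).sub measurable_const).const_mul _)
      have hYb : ∀ i ω, |Y i ω| ≤ 2 := by
        intro i ω
        have hcs := Finset.sum_mul_sq_le_sq_mul_sq Finset.univ (fun a => u j a) (fun a => d i ω a)
        have h1 : (Y i ω) ^ 2 ≤ 2 := by
          calc (Y i ω) ^ 2 ≤ (∑ a, (u j a) ^ 2) * (∑ a, (d i ω a) ^ 2) := hcs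
            _ = ∑ a, (d i ω a) ^ 2 := by rw [hunorm j, one_mul]
            _ ≤ 2 := hd2 i ω
        calc |Y i ω| = Real.sqrt ((Y i ω) ^ 2) := (Real.sqrt_sq_eq_abs _).symm
          _ ≤ Real.sqrt (2 ^ 2) := Real.sqrt_le_sqrt (h1.trans (by norm_num))
          _ = 2 := Real.sqrt_sq (by norm_num)
      have hdint : ∀ i (a : Fin k), Integrable (fun ω => u j a * d i ω a) P := by
        intro i a
        refine intbdd _ (|u j a|) (((hXam i a).sub measurable_const).const_mul _) fun ω => ?_
        rw [abs_mul]
        calc |u j a| * |d i ω a| ≤ |u j a| * 1 :=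
              mul_le_mul_of_nonneg_left (hdb i ω a) (abs_nonneg _)
          _ = |u j a| := mul_one _
      have hY0 : ∀ i, ∫ ω, Y i ω ∂P = 0 := by
        intro i
        rw [hYdef]
        simp only
        rw [integral_finset_sum _ (fun a _ => hdint i a)]
        refine Finset.sum_eq_zero fun a _ => ?_
        rw [integral_const_mul]
        have hd0 : ∫ ω, d i ω a ∂P = 0 := by
          rw [hddef]
          simp only
          rw [integral_sub (hXint i a) (integrable_const _), integral_const]
          simp [hpdef]
        rw [hd0, mul_zero]
      have hYindep : iIndepFun Y P := by
        have := hXindep.comp (fun i (x : Fin k → ℝ) => ∑ a, u j a * (x a - p i a))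
          (fun i => Finset.measurable_sum _ fun a _ =>
            ((measurable_pi_apply a).sub measurable_const).const_mul _)
        exact this
      have hYint : ∀ i, Integrable (Y i) P := fun i => intbdd _ 2 (hYm i) (hYb i)
      have hYint2 : ∀ i i', Integrable (fun ω => Y i ω * Y i' ω) P := fun i i' =>
        intbdd _ 4 ((hYm i).mul (hYm i')) fun ω => by
          rw [abs_mul]
          nlinarith [hYb i ω, hYb i' ω, abs_nonneg (Y i ω), abs_nonneg (Y i' ω)]
      have hcY : ∀ ω, c j ω = ∑ i, Y i ω := by
        intro ω
        rw [hcdef]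
        simp only
        calc ∑ a, u j a * v ω a = ∑ a, ∑ i, u j a * d i ω a := by
              refine Finset.sum_congr rfl fun a _ => ?_
              rw [hvd ω a, Finset.mul_sum]
          _ = ∑ i, ∑ a, u j a * d i ω a := Finset.sum_comm
      have hvar : ∑ i, ∫ ω, (Y i ω) ^ 2 ∂P ≤ ν j := by
        have hνq : ν j = ∫ ω, (c j ω) ^ 2 ∂P := hquad (u j)
        have hsplit : ∫ ω, (c j ω) ^ 2 ∂P = ∑ i, ∑ i', ∫ ω, Y i ω * Y i' ω ∂P := by
          have hpt : ∀ ω, (c j ω) ^ 2 = ∑ i, ∑ i', Y i ω * Y i' ω := by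
            intro ω
            rw [hcY ω, sq, Finset.sum_mul_sum]
          rw [integral_congr_ae (ae_of_all _ hpt),
            integral_finset_sum _ fun i _ => integrable_finset_sum _ fun i' _ => hYint2 i i']
          exact Finset.sum_congr rfl fun i _ => integral_finset_sum _ fun i' _ => hYint2 i i'
        have hdiag : ∑ i, ∑ i', ∫ ω, Y i ω * Y i' ω ∂P = ∑ i, ∫ ω, (Y i ω) ^ 2 ∂P := by
          refine Finset.sum_congr rfl fun i _ => ?_
          rw [Finset.sum_eq_single i]
          · exact integral_congr_ae (ae_of_all _ fun ω => (sq (Y i ω)).symm)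
          · intro i' _ hne
            have hind : IndepFun (Y i) (Y i') P := hYindep.indepFun (Ne.symm hne)
            have heq : ∫ ω, Y i ω * Y i' ω ∂P = integral P (Y i * Y i') := rfl
            rw [heq, hind.integral_mul_eq_mul_integral (hYint i).aestronglyMeasurable (hYint i').aestronglyMeasurable]
            have h0 : integral P (Y i) = 0 := hY0 i
            rw [h0, zero_mul]
          · intro h
            exact absurd (Finset.mem_univ i) h
        exact le_of_eq (by rw [hνq, hsplit, hdiag])
      have hsm : (sj j) ^ 2 = 1000 * L * ν j + 1000 * (k:ℝ) * L ^ 2 := by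
        rw [hs2 j, hmν j]
        field_simp
      have hsge : 40 * L ≤ sj j := by
        have h1 : (40 * L) ^ 2 ≤ (sj j) ^ 2 := by
          rw [hsm]
          nlinarith [hν0 j, hL0, hk2, sq_nonneg L, mul_pos hL0 hL0]
        nlinarith [hs0 j, h1]
      have hE4 : E ≤ sj j / 4 := by linarith
      have hor : ν j ≤ sj j ∨ E ≤ (sj j) ^ 2 / (4 * ν j) := by
        by_cases hc : ν j ≤ sj j
        · exact Or.inl hc
        · right
          push_neg at hc
          have hνpos : 0 < ν j := lt_trans (hs0 j) hc
          rw [le_div_iff₀ (by positivity)]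
          nlinarith [hν0 j, hL0, hsm, hE6, mul_pos hL0 hνpos, hk2, sq_nonneg L]
      have hup : (P {ω | sj j ≤ ∑ i, Y i ω}).toReal ≤ Real.exp (-E) :=
        bernstein_tail hYm hYindep hYb hY0 hvar (hν0 j) (hs0 j) hE4 hor
      have hYindep' : iIndepFun (fun i ω => -(Y i ω)) P := by
        have := hYindep.comp (fun _ (x : ℝ) => -x) (fun _ => measurable_neg)
        exact this
      have hdown : (P {ω | sj j ≤ ∑ i, -(Y i ω)}).toReal ≤ Real.exp (-E) := by
        refine bernstein_tail (fun i => (hYm i).neg) hYindep'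
          (fun i ω => by rw [Pi.neg_apply, abs_neg]; exact hYb i ω)
          (fun i => by simp only [Pi.neg_apply]; rw [integral_neg, hY0 i, neg_zero]) ?_ (hν0 j) (hs0 j) hE4 hor
        simpa only [Pi.neg_apply, neg_sq] using hvar
      have hsub : {ω | sj j ≤ |c j ω|} ⊆
          {ω | sj j ≤ ∑ i, Y i ω} ∪ {ω | sj j ≤ ∑ i, -(Y i ω)} := by
        intro ω hω
        simp only [Set.mem_setOf_eq, Set.mem_union] at hω ⊢
        rcases le_abs.1 hω with h | h
        · left
          rw [← hcY ω]
          exact h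
        · right
          calc sj j ≤ -(c j ω) := h
            _ = ∑ i, -(Y i ω) := by rw [hcY ω, ← Finset.sum_neg_distrib]
      have hPle : ∀ (A : Set Ω), (P A).toReal ≤ Real.exp (-E) →
          P A ≤ ENNReal.ofReal (ε / (20 * k)) := by
        intro A hA
        rw [← hexpE]
        exact (ENNReal.le_ofReal_iff_toReal_le (measure_ne_top P A) (Real.exp_pos _).le).2 hA
      calc P {ω | sj j ≤ |c j ω|}
          ≤ P ({ω | sj j ≤ ∑ i, Y i ω} ∪ {ω | sj j ≤ ∑ i, -(Y i ω)}) := measure_mono hsub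
        _ ≤ P {ω | sj j ≤ ∑ i, Y i ω} + P {ω | sj j ≤ ∑ i, -(Y i ω)} := measure_union_le _ _
        _ ≤ ENNReal.ofReal (ε / (20 * k)) + ENNReal.ofReal (ε / (20 * k)) :=
            add_le_add (hPle _ hup) (hPle _ hdown)
        _ = ENNReal.ofReal (ε / (10 * k)) := by
            rw [← ENNReal.ofReal_add (by positivity) (by positivity)]
            congr 1
            field_simp
            ring
    -- union bound and conclusion
    set A : Fin k → Set Ω := fun j => {ω | sj j ≤ |c j ω|} with hAdef
    have hAm : ∀ j, MeasurableSet (A j) := fun j =>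
      measurableSet_le measurable_const (hcm j).abs
    have hBle : P (⋃ j, A j) ≤ ENNReal.ofReal (ε / 10) := by
      calc P (⋃ j, A j) ≤ ∑' j, P (A j) := measure_iUnion_le _
        _ = ∑ j, P (A j) := tsum_fintype _
        _ ≤ ∑ _j : Fin k, ENNReal.ofReal (ε / (10 * k)) := Finset.sum_le_sum fun j _ => htail j
        _ = (k : ℝ≥0∞) * ENNReal.ofReal (ε / (10 * k)) := by
            rw [Finset.sum_const, Finset.card_univ, Fintype.card_fin, nsmul_eq_mul]
        _ = ENNReal.ofReal (ε / 10) := by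
            rw [← ENNReal.ofReal_natCast k, ← ENNReal.ofReal_mul (Nat.cast_nonneg k)]
            congr 1
            field_simp
    have hsubset : (⋃ j, A j)ᶜ ⊆ {ω | v ω ⬝ᵥ (M⁻¹ *ᵥ v ω) ≤ (1000:ℝ)} := by
      intro ω hω
      simp only [Set.mem_compl_iff, Set.mem_iUnion, not_exists, hAdef,
        Set.mem_setOf_eq] at hω ⊢
      rw [hQ ω]
      have hterm : ∀ j, (c j ω) ^ 2 / m j ≤ 1000 / (k:ℝ) := by
        intro j
        have h1 : |c j ω| < sj j := not_le.1 (hω j)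
        have h2 : (c j ω) ^ 2 ≤ (sj j) ^ 2 := by
          nlinarith [abs_nonneg (c j ω), sq_abs (c j ω)]
        calc (c j ω) ^ 2 / m j ≤ (sj j) ^ 2 / m j := by
              exact (div_le_div_iff_of_pos_right (hm0 j)).2 h2
          _ = 1000 / (k:ℝ) := by
              rw [hs2 j]
              exact mul_div_cancel_right₀ _ (hm0 j).ne'
      calc ∑ j, (c j ω) ^ 2 / m j ≤ ∑ _j : Fin k, (1000 / (k:ℝ)) :=
            Finset.sum_le_sum fun j _ => hterm j
        _ = 1000 := by
            rw [Finset.sum_const, Finset.card_univ, Fintype.card_fin, nsmul_eq_mul]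
            field_simp
    have hcompl : ENNReal.ofReal (1 - ε / 10) ≤ P ((⋃ j, A j)ᶜ) := by
      rw [measure_compl (MeasurableSet.iUnion hAm) (measure_ne_top P _), measure_univ]
      have h1 : ENNReal.ofReal (1 - ε / 10) = 1 - ENNReal.ofReal (ε / 10) := by
        rw [ENNReal.ofReal_sub _ (by positivity), ENNReal.ofReal_one]
      rw [h1]
      exact tsub_le_tsub_left hBle 1
    exact le_trans hcompl (measure_mono hsubset)
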